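/- Let κ > 0, σ > 0, y > 0 and ε > 0 be real numbers with κ − σ + y ≠ 0. Define x = [σ(κ+y)² + ε(κ+1)²(κ−σ+2y) − √((ε(κ+1)²(κ−σ) + σ(κ+y)²)² + 4ε(κ+1)²σ²y(κ+y))] / (2ε(κ+1)(κ−σ+y)). Then x exactly satisfies the implicit CSP one-iteration SIM equation for the MM system: y − x(κ+y)/(κ+1) + ε (κ+1−x)(σx + y − xy + κ(y−x))/(σ(κ+y)) = 0. -/
import Mathlib


/-- Explicit SIM approximation of the Michaelis–Menten slow subsystem obtained by the
CSP method with one iteration. -/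
noncomputable def MMcsp (κ σ y ε : ℝ) : ℝ :=
  (σ * (κ + y) ^ 2 + ε * (κ + 1) ^ 2 * (κ - σ + 2 * y) -
      Real.sqrt ((ε * (κ + 1) ^ 2 * (κ - σ) + σ * (κ + y) ^ 2) ^ 2 +
        4 * ε * (κ + 1) ^ 2 * σ ^ 2 * y * (κ + y))) /
    (2 * ε * (κ + 1) * (κ - σ + y))

/-- The explicit CSP one-iteration SIM approximation exactly satisfies the implicit CSP
one-iteration SIM equation for the Michaelis–Menten system. -/
theorem mm_csp_satisfies_implicit (κ σ y ε : ℝ) (hκ : 0 < κ) (hσ : 0 < σ) (hy : 0 < y)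
    (hε : 0 < ε) (hne : κ - σ + y ≠ 0) :
    y - MMcsp κ σ y ε * (κ + y) / (κ + 1) +
      ε * (κ + 1 - MMcsp κ σ y ε) *
        (σ * MMcsp κ σ y ε + y - MMcsp κ σ y ε * y + κ * (y - MMcsp κ σ y ε)) /
        (σ * (κ + y)) = 0 := by
  have hk1 : (κ + 1) ≠ 0 := by positivity
  have hky : (κ + y) ≠ 0 := by positivity
  have hσne : σ ≠ 0 := ne_of_gt hσ
  have hd : (2 * ε * (κ + 1) * (κ - σ + y)) ≠ 0 := by
    have h2 : (2:ℝ) * ε * (κ + 1) ≠ 0 := by positivity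
    exact mul_ne_zero h2 hne
  have hDnn : (0:ℝ) ≤ (ε * (κ + 1) ^ 2 * (κ - σ) + σ * (κ + y) ^ 2) ^ 2 +
        4 * ε * (κ + 1) ^ 2 * σ ^ 2 * y * (κ + y) := by positivity
  have hs : Real.sqrt ((ε * (κ + 1) ^ 2 * (κ - σ) + σ * (κ + y) ^ 2) ^ 2 +
        4 * ε * (κ + 1) ^ 2 * σ ^ 2 * y * (κ + y)) ^ 2 =
      (ε * (κ + 1) ^ 2 * (κ - σ) + σ * (κ + y) ^ 2) ^ 2 +
        4 * ε * (κ + 1) ^ 2 * σ ^ 2 * y * (κ + y) := Real.sq_sqrt hDnn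
  set s := Real.sqrt ((ε * (κ + 1) ^ 2 * (κ - σ) + σ * (κ + y) ^ 2) ^ 2 +
        4 * ε * (κ + 1) ^ 2 * σ ^ 2 * y * (κ + y)) with hsdef
  set x := MMcsp κ σ y ε with hxdef
  have hxd : x * (2 * ε * (κ + 1) * (κ - σ + y)) =
      σ * (κ + y) ^ 2 + ε * (κ + 1) ^ 2 * (κ - σ + 2 * y) - s :=
    div_mul_cancel₀ _ hd
  have key2 : ε * (κ + 1) * (κ - σ + y) * (x * (2 * ε * (κ + 1) * (κ - σ + y))) ^ 2 -
      (σ * (κ + y) ^ 2 + ε * (κ + 1) ^ 2 * (κ - σ + 2 * y)) *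
        (2 * ε * (κ + 1) * (κ - σ + y)) * (x * (2 * ε * (κ + 1) * (κ - σ + y))) +
      (κ + 1) * y * (σ * (κ + y) + ε * (κ + 1) ^ 2) * (2 * ε * (κ + 1) * (κ - σ + y)) ^ 2
      = 0 := by
    linear_combination
      (ε * (κ + 1) * (κ - σ + y) *
          (x * (2 * ε * (κ + 1) * (κ - σ + y)) +
            (σ * (κ + y) ^ 2 + ε * (κ + 1) ^ 2 * (κ - σ + 2 * y) - s)) -
        (σ * (κ + y) ^ 2 + ε * (κ + 1) ^ 2 * (κ - σ + 2 * y)) *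
          (2 * ε * (κ + 1) * (κ - σ + y))) * hxd +
      ε * (κ + 1) * (κ - σ + y) * hs
  have key : ε * (κ + 1) * (κ - σ + y) * x ^ 2 -
      (σ * (κ + y) ^ 2 + ε * (κ + 1) ^ 2 * (κ - σ + 2 * y)) * x +
      (κ + 1) * y * (σ * (κ + y) + ε * (κ + 1) ^ 2) = 0 := by
    apply mul_left_cancel₀ (pow_ne_zero 2 hd)
    linear_combination key2
  field_simp
  linear_combination key
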